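/- Let c_{n,k} = q^{k(k+1)/2} (Y₂Y₃;q)_k / ((Y₁q;q)_k (q;q)_k (q;q)_{n−k}) for 0 ≤ k ≤ n (and c_{n,k}=0 otherwise). Then for all n ≥ 0 and 0 ≤ k ≤ n, the identity −q^{2k}(1−q^{n−k+1})(1−q^{n−k+2})(1−Y₂Y₃q^{k−2}) c_{n,k−2} + q^{k+1}(1−q^{n−k+1})(1−Y₁q^{k−1})(1−q^{k−1}) c_{n,k−1} + q^{k}(1−Y₂q^{k−1})(1−Y₂Y₃q^{k−1})(1−q^{n−k+1}) c_{n,k−1} − (1−Y₂q^{k−1})(1−Y₁q^{k})(1−q^{k}) c_{n,k} = 0 holds. -/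

import Mathlib

noncomputable def qPoch (q z : ℂ) (n : ℕ) : ℂ := ∏ j ∈ Finset.range n, (1 - z * q ^ j)

noncomputable def cCoef (q Y₁ Y₂ Y₃ : ℂ) (n : ℕ) (k : ℤ) : ℂ :=
  if 0 ≤ k ∧ k ≤ (n : ℤ) then
    q ^ (k.toNat * (k.toNat + 1) / 2) * qPoch q (Y₂ * Y₃) k.toNat
      / (qPoch q (Y₁ * q) k.toNat * qPoch q q k.toNat * qPoch q q (n - k.toNat))
  else 0

lemma qPoch_succ (q z : ℂ) (n : ℕ) :
    qPoch q z (n+1) = qPoch q z n * (1 - z * q ^ n) := Finset.prod_range_succ _ _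

lemma one_sub_q_pow_ne {q : ℂ} (hq1 : ‖q‖ < 1) (j : ℕ) : 1 - q * q ^ j ≠ 0 := by
  intro h
  have h1 : q * q ^ j = 1 := by linear_combination -h
  have h2 : ‖q * q ^ j‖ = 1 := by rw [h1, norm_one]
  have h3 : ‖q * q ^ j‖ ≤ ‖q‖ := by
    rw [norm_mul, norm_pow]
    calc ‖q‖ * ‖q‖ ^ j ≤ ‖q‖ * 1 :=
          mul_le_mul_of_nonneg_left (pow_le_one₀ (norm_nonneg q) hq1.le) (norm_nonneg q)
      _ = ‖q‖ := mul_one _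
  rw [h2] at h3
  linarith

lemma qPoch_q_ne_zero {q : ℂ} (hq1 : ‖q‖ < 1) (m : ℕ) : qPoch q q m ≠ 0 := by
  unfold qPoch
  exact Finset.prod_ne_zero_iff.mpr fun j _ => one_sub_q_pow_ne hq1 j

lemma cCoef_coe (q Y₁ Y₂ Y₃ : ℂ) (n k : ℕ) (h : k ≤ n) :
    cCoef q Y₁ Y₂ Y₃ n (k:ℤ)
    = q ^ (k*(k+1)/2) * qPoch q (Y₂*Y₃) k
        / (qPoch q (Y₁*q) k * qPoch q q k * qPoch q q (n-k)) := by
  rw [cCoef, if_pos ⟨Int.natCast_nonneg k, by exact_mod_cast h⟩]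
  simp

lemma qPoch_zero (q z : ℂ) : qPoch q z 0 = 1 := by simp [qPoch]

lemma qPoch_one (q z : ℂ) : qPoch q z 1 = 1 - z := by simp [qPoch]

lemma tri_succ (m : ℕ) : (m+1)*(m+1+1)/2 = m*(m+1)/2 + (m+1) := by
  induction m with
  | zero => rfl
  | succ i ih =>
    have h1 : (i+1+1)*(i+1+1+1) = (i+1)*(i+1+1) + 2*(i+2) := by ring
    have h2 : (i+1)*(i+1+1) = i*(i+1) + 2*(i+1) := by ring
    omega

lemma cCoef_step (q Y₁ Y₂ Y₃ : ℂ) (hq1 : ‖q‖ < 1)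
    (hY₁ : ∀ k : ℕ, qPoch q (Y₁ * q) k ≠ 0) (k j : ℕ) :
    (1 - Y₁ * q ^ (k+1)) * (1 - q ^ (k+1)) * cCoef q Y₁ Y₂ Y₃ (k+1+j) ((k+1 : ℕ) : ℤ)
    = q ^ (k+1) * (1 - Y₂ * Y₃ * q ^ k) * (1 - q ^ (j+1))
        * cCoef q Y₁ Y₂ Y₃ (k+1+j) ((k : ℕ) : ℤ) := by
  rw [cCoef_coe _ _ _ _ _ (k+1) (by omega), cCoef_coe _ _ _ _ _ k (by omega),
    show k+1+j-(k+1) = j from by omega, show k+1+j-k = j+1 from by omega,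
    tri_succ k]
  simp only [qPoch_succ, pow_add]
  have hYk : qPoch q (Y₁*q) k ≠ 0 := hY₁ k
  have hv : (1:ℂ) - Y₁ * q * q ^ k ≠ 0 := by
    have := hY₁ (k+1); rw [qPoch_succ, mul_ne_zero_iff] at this; exact this.2
  have hq2 : qPoch q q k ≠ 0 := qPoch_q_ne_zero hq1 k
  have hq3 : qPoch q q j ≠ 0 := qPoch_q_ne_zero hq1 j
  have hq4 : (1:ℂ) - q * q ^ k ≠ 0 := one_sub_q_pow_ne hq1 k
  have hq5 : (1:ℂ) - q * q ^ j ≠ 0 := one_sub_q_pow_ne hq1 j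
  simp only [pow_one, mul_comm (q ^ k) q, mul_comm (q ^ j) q, ← mul_assoc Y₁ q]
  field_simp

set_option maxHeartbeats 2000000 in
/-- The key four-term coefficient identity in the proof of Theorem 3.4. -/
theorem cCoef_four_term_identity (q Y₁ Y₂ Y₃ : ℂ)
    (hq0 : 0 < ‖q‖) (hq1 : ‖q‖ < 1)
    (hY₁ : ∀ k : ℕ, qPoch q (Y₁ * q) k ≠ 0) :
    ∀ n k : ℕ, k ≤ n →
      -q ^ (2 * k) * (1 - q ^ (n - k + 1)) * (1 - q ^ (n - k + 2))
          * (1 - Y₂ * Y₃ * q ^ ((k : ℤ) - 2)) * cCoef q Y₁ Y₂ Y₃ n ((k : ℤ) - 2)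
      + q ^ (k + 1) * (1 - q ^ (n - k + 1)) * (1 - Y₁ * q ^ ((k : ℤ) - 1))
          * (1 - q ^ ((k : ℤ) - 1)) * cCoef q Y₁ Y₂ Y₃ n ((k : ℤ) - 1)
      + q ^ k * (1 - Y₂ * q ^ ((k : ℤ) - 1)) * (1 - Y₂ * Y₃ * q ^ ((k : ℤ) - 1))
          * (1 - q ^ (n - k + 1)) * cCoef q Y₁ Y₂ Y₃ n ((k : ℤ) - 1)
      - (1 - Y₂ * q ^ ((k : ℤ) - 1)) * (1 - Y₁ * q ^ k) * (1 - q ^ k)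
          * cCoef q Y₁ Y₂ Y₃ n (k : ℤ) = 0 := by
  intro n k hk
  have hq : q ≠ 0 := by
    intro h; rw [h, norm_zero] at hq0; exact lt_irrefl 0 hq0
  match k, hk with
  | 0, hk =>
    have h2 : cCoef q Y₁ Y₂ Y₃ n (((0:ℕ):ℤ) - 2) = 0 := by
      rw [cCoef, if_neg]; omega
    have h1 : cCoef q Y₁ Y₂ Y₃ n (((0:ℕ):ℤ) - 1) = 0 := by
      rw [cCoef, if_neg]; omega
    rw [h1, h2]
    simp
  | 1, hk =>
    obtain ⟨j, rfl⟩ : ∃ j, n = j + 1 := ⟨n - 1, by omega⟩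
    have h2 : cCoef q Y₁ Y₂ Y₃ (j+1) (((1:ℕ):ℤ) - 2) = 0 := by
      rw [cCoef, if_neg]; omega
    have e1 : ((1:ℕ):ℤ) - 1 = ((0:ℕ):ℤ) := by norm_num
    rw [h2, e1, cCoef_coe q Y₁ Y₂ Y₃ _ 0 (by omega),
      cCoef_coe q Y₁ Y₂ Y₃ _ 1 (by omega)]
    rw [show j + 1 - 0 = j + 1 from rfl, qPoch_succ q q j]
    simp only [qPoch_zero, qPoch_one, Nat.add_sub_cancel, pow_zero, zpow_natCast,
      Nat.sub_self]
    have hA : (1:ℂ) - q ≠ 0 := by simpa using one_sub_q_pow_ne hq1 0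
    have hB : (1:ℂ) - q * q ^ j ≠ 0 := one_sub_q_pow_ne hq1 j
    have hC : qPoch q q j ≠ 0 := qPoch_q_ne_zero hq1 j
    have hD : (1 : ℂ) - Y₁ * q ≠ 0 := by
      have := hY₁ 1
      rw [qPoch_one] at this
      exact this
    field_simp
    ring
  | (m+2), hk =>
    obtain ⟨j, rfl⟩ : ∃ j, n = m + 2 + j := ⟨n - (m+2), by omega⟩
    have e2 : ((m+2:ℕ):ℤ) - 2 = ((m:ℕ):ℤ) := by push_cast; ring
    have e1 : ((m+2:ℕ):ℤ) - 1 = ((m+1:ℕ):ℤ) := by push_cast; ring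
    rw [e2, e1, show m+2+j - (m+2) = j from by omega]
    simp only [zpow_natCast]
    have S1 := cCoef_step q Y₁ Y₂ Y₃ hq1 hY₁ m (j+1)
    have S2 := cCoef_step q Y₁ Y₂ Y₃ hq1 hY₁ (m+1) j
    simp only [show m+1+1 = m+2 from rfl, show j+1+1 = j+2 from rfl,
      show m+1+(j+1) = m+2+j from by omega] at S1 S2
    linear_combination q^(m+3)*(1-q^(j+1)) * S1 - (1-Y₂*q^(m+1)) * S2
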